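/- For every integer k ≥ 2, the polynomial Φ_k(x) = x^k - 2x^{k-1} - x^{k-2} - ... - x - 1 has exactly one real root γ with |γ| > 1, and this root satisfies φ²(1 - φ^{-k}) < γ < φ², where φ = (1+√5)/2. -/

import Mathlib

noncomputable def φ : ℝ := (1 + Real.sqrt 5) / 2

/-- `γ` is a root of the characteristic polynomial
`Φ_k(x) = x^k - 2x^{k-1} - x^{k-2} - ⋯ - x - 1` of the `k`-Pell-Lucas sequence. -/
def IsCharRoot (k : ℕ) (γ : ℝ) : Prop :=
  γ ^ k = 2 * γ ^ (k - 1) + ∑ i ∈ Finset.range (k - 1), γ ^ i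

/-- Multiplying `Φ_{m+2}(γ)` by `γ - 1` gives `γ^{m+1}(γ² - 3γ + 1) + 1`. -/
lemma char_iff (m : ℕ) (γ : ℝ) (hγ : γ ≠ 1) :
    IsCharRoot (m+2) γ ↔ γ^(m+1) * (γ^2 - 3*γ + 1) = -1 := by
  unfold IsCharRoot
  have hr : m + 2 - 1 = m + 1 := rfl
  rw [hr]
  have hg : (∑ i ∈ Finset.range (m+1), γ ^ i) * (γ - 1) = γ^(m+1) - 1 := geom_sum_mul γ (m+1)
  constructor
  · intro h; linear_combination (γ - 1) * h + hg
  · intro h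
    have h0 : (γ^(m+2) - (2 * γ^(m+1) + ∑ i ∈ Finset.range (m+1), γ ^ i)) * (γ - 1) = 0 := by
      linear_combination h - hg
    rcases mul_eq_zero.mp h0 with h1 | h1
    · linarith [sub_eq_zero.mp h1]
    · exact absurd (by linarith : γ = 1) hγ

lemma sqrt5_sq : Real.sqrt 5 ^ 2 = 5 := Real.sq_sqrt (by norm_num)
lemma sqrt5_gt : 2 < Real.sqrt 5 := by
  nlinarith [sqrt5_sq, Real.sqrt_nonneg 5]
lemma phi_gt : 1 < φ := by unfold φ; nlinarith [sqrt5_gt]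
lemma phi_pos : 0 < φ := by linarith [phi_gt]
lemma phi_sq : φ^2 = φ + 1 := by unfold φ; nlinarith [sqrt5_sq]
lemma phi_u : 2 * φ^2 = 3 + Real.sqrt 5 := by unfold φ; nlinarith [sqrt5_sq]
lemma u_quad : (φ^2)*(φ^2) - 3*(φ^2) + 1 = 0 := by nlinarith [phi_u, sqrt5_sq]

/-- Existence of a root in the prescribed interval, via the intermediate value theorem. -/
lemma exists_root (m : ℕ) :
    ∃ c, IsCharRoot (m+2) c ∧ φ^2*(1 - φ^(-((m+2 : ℕ) : ℤ))) < c ∧ c < φ^2 := by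
  have hφm : (1:ℝ) ≤ φ^m := by
    calc (1:ℝ) = 1^m := (one_pow m).symm
    _ ≤ φ^m := pow_le_pow_left₀ (by norm_num) phi_gt.le m
  have hφmpos : (0:ℝ) < φ^m := by positivity
  set u : ℝ := φ^2 with hu
  set ε : ℝ := (φ^m)⁻¹ with hε
  have hε0 : 0 < ε := by positivity
  have hε1 : ε ≤ 1 := by rw [hε]; exact inv_le_one_of_one_le₀ hφm
  have hLdef : φ^2*(1 - φ^(-((m+2 : ℕ) : ℤ))) = u - ε := by
    have hexp : φ^(m+2) = φ^m * φ^2 := by ring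
    rw [zpow_neg, zpow_natCast, hexp, hε, hu]
    have h0 : (φ:ℝ) ≠ 0 := ne_of_gt phi_pos
    field_simp
  set L : ℝ := u - ε with hL
  have hu2 : 2 < u := by rw [hu]; nlinarith [phi_u, sqrt5_gt]
  have hLφ : φ ≤ L := by
    have h := phi_sq
    rw [hL, hu]; linarith
  have hL1 : 1 < L := lt_of_lt_of_le phi_gt hLφ
  have hLu : L < u := by rw [hL]; linarith
  have hquad : L^2 - 3*L + 1 = ε*(ε - Real.sqrt 5) := by
    have h1 : u*u - 3*u + 1 = 0 := u_quad
    have h2 : 2*u = 3 + Real.sqrt 5 := phi_u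
    have h3 : L = u - ε := hL
    nlinarith [h1, h2, h3, sq_nonneg (L - u + ε)]
  have hpow : φ^(m+1) ≤ L^(m+1) := pow_le_pow_left₀ phi_pos.le hLφ _
  have hφε : φ^(m+1) * ε = φ := by
    rw [hε, pow_succ]
    field_simp
  have hfL : L^(m+1) * (L^2 - 3*L + 1) + 1 < 0 := by
    rw [hquad]
    have h5 : 1 ≤ Real.sqrt 5 - ε := by linarith [sqrt5_gt]
    have h6 : (0:ℝ) ≤ ε * (Real.sqrt 5 - ε) := by nlinarith [sqrt5_gt]
    have hkey := mul_le_mul_of_nonneg_right hpow h6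
    have e1 : φ^(m+1) * (ε*(Real.sqrt 5 - ε)) = φ * (Real.sqrt 5 - ε) := by
      rw [← mul_assoc, hφε]
    have h2 : φ * (Real.sqrt 5 - 1) ≤ φ * (Real.sqrt 5 - ε) := by
      nlinarith [phi_pos]
    have h3 : φ * (Real.sqrt 5 - 1) = 2 := by unfold φ; nlinarith [sqrt5_sq]
    have e2 : L^(m+1)*(ε*(ε-Real.sqrt 5)) = -(L^(m+1)*(ε*(Real.sqrt 5-ε))) := by ring
    rw [e1] at hkey
    linarith [hkey, h2, h3, e2]
  have hfu : (0:ℝ) < u^(m+1) * (u^2 - 3*u + 1) + 1 := by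
    have h : u^2 - 3*u + 1 = 0 := by rw [hu]; nlinarith [u_quad]
    rw [h]; norm_num
  have hcont : ContinuousOn (fun x : ℝ => x^(m+1) * (x^2 - 3*x + 1) + 1) (Set.Icc L u) := by
    fun_prop
  have hmem : (0:ℝ) ∈ Set.Ioo (L^(m+1) * (L^2 - 3*L + 1) + 1) (u^(m+1) * (u^2 - 3*u + 1) + 1) :=
    ⟨hfL, hfu⟩
  obtain ⟨c, hc, hfc⟩ := intermediate_value_Ioo hLu.le hcont hmem
  refine ⟨c, ?_, by rw [hLdef]; exact hc.1, hc.2⟩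
  have hc1 : c ≠ 1 := by have := hc.1; intro h; rw [h] at this; linarith
  have hfc' : c^(m+1) * (c^2 - 3*c + 1) + 1 = 0 := hfc
  exact (char_iff m c hc1).mpr (by linarith)

/-- Any root with `|γ| > 1` is in fact `> 1` (no root with `γ < -1`). -/
lemma root_pos (m : ℕ) {γ : ℝ} (hr : IsCharRoot (m+2) γ) (ha : 1 < |γ|) : 1 < γ := by
  by_contra h
  push_neg at h
  have hneg : γ < -1 := by
    rcases abs_cases γ with ⟨h1, _⟩ | ⟨h1, _⟩
    · rw [h1] at ha; linarith
    · rw [h1] at ha; linarith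
  have hγ1 : γ ≠ 1 := by linarith
  have hE : γ^(m+1) * (γ^2 - 3*γ + 1) = -1 := (char_iff m γ hγ1).mp hr
  have hQ : 5 ≤ γ^2 - 3*γ + 1 := by nlinarith
  have habs : |γ^(m+1)| * (γ^2 - 3*γ + 1) = 1 := by
    have := congrArg abs hE
    rwa [abs_mul, abs_of_pos (by linarith : (0:ℝ) < γ^2 - 3*γ + 1), abs_neg, abs_one] at this
  have h1γ : (1:ℝ) ≤ |γ| := by linarith
  have hpow : (1:ℝ) ≤ |γ|^(m+1) := by
    calc (1:ℝ) = 1^(m+1) := (one_pow _).symm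
    _ ≤ |γ|^(m+1) := pow_le_pow_left₀ (by norm_num) h1γ _
  rw [abs_pow] at habs
  nlinarith

/-- Uniqueness: there is at most one root `> 1`. -/
lemma uniq_aux (m : ℕ) {a b : ℝ} (ha1 : 1 < a) (hab : a < b)
    (ha : IsCharRoot (m+2) a) (hb : IsCharRoot (m+2) b) : False := by
  unfold IsCharRoot at ha hb
  have hr : m + 2 - 1 = m + 1 := rfl
  rw [hr] at ha hb
  have hb1 : 1 < b := ha1.trans hab
  have ha0 : 0 < a := by linarith
  have hb0 : 0 < b := by linarith
  set Sa := ∑ i ∈ Finset.range (m+1), a ^ i with hSa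
  set Sb := ∑ i ∈ Finset.range (m+1), b ^ i with hSb
  have key : 2*a^(m+1)*b^(m+2) + Sa*b^(m+2) = 2*b^(m+1)*a^(m+2) + Sb*a^(m+2) := by
    linear_combination a^(m+2)*hb - b^(m+2)*ha
  have h2 : 2*b^(m+1)*a^(m+2) < 2*a^(m+1)*b^(m+2) := by
    have e1 : a^(m+2) = a^(m+1) * a := by ring
    have e2 : b^(m+2) = b^(m+1) * b := by ring
    rw [e1, e2]
    have := mul_pos (pow_pos ha0 (m+1)) (pow_pos hb0 (m+1))
    have hle : a^(m+1) ≤ b^(m+1) := pow_le_pow_left₀ ha0.le hab.le _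
    nlinarith [pow_pos ha0 (m+1), pow_pos hb0 (m+1)]
  have hsum : Sb*a^(m+2) < Sa*b^(m+2) := by
    rw [hSa, hSb, Finset.sum_mul, Finset.sum_mul]
    apply Finset.sum_lt_sum_of_nonempty (by simp)
    intro i hi
    have him : i ≤ m := by simpa [Nat.lt_succ_iff] using hi
    have ea : a^(m+2) = a^i * a^(m+2-i) := by rw [← pow_add]; congr 1; omega
    have eb : b^(m+2) = b^i * b^(m+2-i) := by rw [← pow_add]; congr 1; omega
    rw [ea, eb]
    have h1 : a^(m+2-i) < b^(m+2-i) := pow_lt_pow_left₀ hab ha0.le (by omega)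
    have hle : a^i ≤ b^i := pow_le_pow_left₀ ha0.le hab.le _
    nlinarith [mul_pos (pow_pos ha0 i) (pow_pos hb0 i), h1]
  linarith

lemma root_unique (m : ℕ) {a b : ℝ} (ha1 : 1 < a) (hb1 : 1 < b)
    (ha : IsCharRoot (m+2) a) (hb : IsCharRoot (m+2) b) : a = b := by
  rcases lt_trichotomy a b with h | h | h
  · exact absurd (uniq_aux m ha1 h ha hb) not_false
  · exact h
  · exact absurd (uniq_aux m hb1 h hb ha) not_false

theorem charPoly_dominant_root (k : ℕ) (hk : 2 ≤ k) :
    (∃! γ : ℝ, IsCharRoot k γ ∧ 1 < |γ|) ∧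
      ∀ γ : ℝ, IsCharRoot k γ ∧ 1 < |γ| →
        φ ^ 2 * (1 - φ ^ (-(k : ℤ))) < γ ∧ γ < φ ^ 2 := by
  obtain ⟨m, rfl⟩ : ∃ m, k = m + 2 := ⟨k - 2, by omega⟩
  obtain ⟨c, hcroot, hcL, hcu⟩ := exists_root m
  have hL1 : 1 < φ^2*(1 - φ^(-((m+2 : ℕ) : ℤ))) := by
    -- from the existence proof we know L ≥ φ > 1; redo quickly
    have hφm : (1:ℝ) ≤ φ^m := by
      calc (1:ℝ) = 1^m := (one_pow m).symm
      _ ≤ φ^m := pow_le_pow_left₀ (by norm_num) phi_gt.le m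
    have hφmpos : (0:ℝ) < φ^m := by positivity
    have hε1 : (φ^m)⁻¹ ≤ 1 := inv_le_one_of_one_le₀ hφm
    have hLdef : φ^2*(1 - φ^(-((m+2 : ℕ) : ℤ))) = φ^2 - (φ^m)⁻¹ := by
      have hexp : φ^(m+2) = φ^m * φ^2 := by ring
      rw [zpow_neg, zpow_natCast, hexp]
      have h0 : (φ:ℝ) ≠ 0 := ne_of_gt phi_pos
      field_simp
    rw [hLdef]
    have := phi_sq
    linarith [phi_gt]
  have hc1 : 1 < c := lt_trans hL1 hcL
  have habs : 1 < |c| := by rw [abs_of_pos (by linarith)]; exact hc1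
  constructor
  · refine ⟨c, ⟨hcroot, habs⟩, ?_⟩
    rintro γ ⟨hγr, hγa⟩
    exact root_unique m (root_pos m hγr hγa) hc1 hγr hcroot
  · rintro γ ⟨hγr, hγa⟩
    have : γ = c := root_unique m (root_pos m hγr hγa) hc1 hγr hcroot
    rw [this]
    exact ⟨hcL, hcu⟩
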